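/- For a ≥ 0, v > 0 with v^α > 0, the Sadik transform of the function t ↦ (t − a)·η(t − a) equals e^{−a v^α} / v^{2α+β}. -/

import Mathlib

open Real MeasureTheory

/-- Sadik transform of `(t-a) η(t-a)` equals `e^{-a v^α} / v^{2α+β}`. -/
theorem sadik_transform_ramp (a α β v : ℝ) (ha : 0 ≤ a)
    (hα : α ≠ 0) (hv : 0 < v) (hvα : 0 < v ^ α) :
    v ^ (-β) * ∫ t in Set.Ioi (0:ℝ),
        Real.exp (-t * v ^ α) * ((t - a) * (if 0 ≤ t - a then (1:ℝ) else 0)) =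
      Real.exp (-a * v ^ α) / v ^ (2 * α + β) := by
  set s := v ^ α with hs
  -- Step 1: reduce to integral over Ioi a
  have h1 : (∫ t in Set.Ioi (0:ℝ),
      Real.exp (-t * s) * ((t - a) * (if 0 ≤ t - a then (1:ℝ) else 0)))
      = ∫ t in Set.Ioi a, Real.exp (-t * s) * (t - a) := by
    have hind : ∀ t, Real.exp (-t * s) * ((t - a) * (if 0 ≤ t - a then (1:ℝ) else 0))
        = Set.indicator (Set.Ici a) (fun t => Real.exp (-t * s) * (t - a)) t := by
      intro t
      by_cases h : a ≤ t
      · simp [Set.indicator_of_mem, h, sub_nonneg.mpr h]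
      · have : ¬ (0 ≤ t - a) := by simp [sub_nonneg]; linarith
        simp [Set.indicator_of_notMem, h, this]
    simp_rw [hind]
    rw [setIntegral_indicator measurableSet_Ici]
    have hset : (Set.Ioi (0:ℝ) ∩ Set.Ici a : Set ℝ) =ᵐ[volume] (Set.Ioi a : Set ℝ) := by
      rw [MeasureTheory.ae_eq_set]
      constructor
      · refine measure_mono_null (fun x hx => ?_) (measure_singleton a)
        obtain ⟨⟨_, hx2⟩, hx3⟩ := hx
        simp only [Set.mem_singleton_iff]
        simp only [Set.mem_Ioi, not_lt] at hx3
        simp only [Set.mem_Ici] at hx2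
        linarith
      · refine measure_mono_null (fun x hx => ?_) (measure_singleton a)
        obtain ⟨hx1, hx2⟩ := hx
        exact absurd ⟨lt_of_le_of_lt ha hx1, Set.mem_Ici.mpr (le_of_lt hx1)⟩ hx2
    exact setIntegral_congr_set hset
  -- Step 2: shift
  have h2 : (∫ t in Set.Ioi a, Real.exp (-t * s) * (t - a))
      = ∫ u in Set.Ioi (0:ℝ), Real.exp (-(u + a) * s) * u := by
    have := (measurePreserving_add_right (volume : Measure ℝ) a).setIntegral_preimage_emb
      (measurableEmbedding_addRight a)
      (fun t => Real.exp (-t * s) * (t - a)) (Set.Ioi a)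
    simp only [Set.preimage_add_const_Ioi, sub_self] at this
    rw [← this]
    congr 1
    ext u
    ring_nf
  -- Step 3: compute
  have hs0 : 0 < s := hvα
  have h3 : (∫ u in Set.Ioi (0:ℝ), Real.exp (-(u + a) * s) * u)
      = Real.exp (-a * s) * ∫ u in Set.Ioi (0:ℝ), u ^ ((2:ℝ) - 1) * Real.exp (-(s * u)) := by
    rw [← integral_const_mul]
    refine setIntegral_congr_fun measurableSet_Ioi (fun u hu => ?_)
    rw [show ((2:ℝ) - 1) = 1 by norm_num, Real.rpow_one,
      show -(u + a) * s = -a * s + -(s * u) by ring, Real.exp_add]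
    ring
  rw [h1, h2, h3, integral_rpow_mul_exp_neg_mul_Ioi two_pos hs0, Real.Gamma_two, mul_one]
  have hpow : (1 / s) ^ (2:ℝ) = v ^ (-(α * 2)) := by
    have h : (1 / s) = v ^ (-α) := by rw [hs, one_div, ← Real.rpow_neg hv.le]
    rw [h, ← Real.rpow_mul hv.le]
    ring_nf
  rw [hpow]
  have : v ^ (-β) * (Real.exp (-a * s) * v ^ (-(α * 2)))
      = Real.exp (-a * s) * (v ^ (-β) * v ^ (-(α * 2))) := by ring
  rw [this, ← Real.rpow_add hv, div_eq_mul_inv, ← Real.rpow_neg hv.le]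
  ring_nf
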